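/- Let A be an m×n integer matrix with integrally independent columns, with Hermite normal form AU = (D 0) where U = (U_1 U_2) is unimodular. Then for each row i of U_2 ∈ Z^{n×(n-m)}, there exists a prime q_i ≥ 2 dividing every entry (U_2)_{ij}, j = 1,...,n-m. -/

import Mathlib

/-- Vectors are integrally independent if none is an integer linear combination
of the others. -/
def IntegrallyIndependent {ι α : Type*} [Fintype ι] [DecidableEq ι] (a : ι → α → ℤ) : Prop :=
  ¬ ∃ (k : ι) (μ : ι → ℤ), a k = ∑ i ∈ Finset.univ.erase k, μ i • a i

/-- Bezout for finite families over ℤ. -/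
lemma finset_gcd_bezout {β : Type*} [DecidableEq β] (s : Finset β) (f : β → ℤ) :
    ∃ c : β → ℤ, ∑ j ∈ s, c j * f j = s.gcd f := by
  induction s using Finset.induction_on with
  | empty => exact ⟨0, by simp⟩
  | @insert b s hb ih =>
    obtain ⟨c, hc⟩ := ih
    set X := Int.gcdA (f b) (s.gcd f) with hX
    set Y := Int.gcdB (f b) (s.gcd f) with hY
    refine ⟨fun j => if j = b then X else c j * Y, ?_⟩
    rw [Finset.sum_insert hb, Finset.gcd_insert]
    have h1 : GCDMonoid.gcd (f b) (s.gcd f) = f b * X + s.gcd f * Y := by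
      rw [hX, hY, ← Int.gcd_eq_gcd_ab, Int.coe_gcd]
    rw [h1, ← hc]
    have hbeta : (fun j => if j = b then X else c j * Y) b = X := by simp
    rw [hbeta]
    rw [Finset.sum_congr rfl (fun j hj =>
      show (if j = b then X else c j * Y) * f j = c j * f j * Y by
        rw [if_neg (by rintro rfl; exact hb hj)]; ring)]
    rw [← Finset.sum_mul]
    ring

/-- If `A` has integrally independent columns with Hermite normal form `A * U = (D 0)`,
`U` unimodular, then every row of `U₂` (the last `k = n - m` columns of `U`) is divisible
by some prime `q ≥ 2`. -/
theorem stmt8 {m k : ℕ} (A : Matrix (Fin m) (Fin m ⊕ Fin k) ℤ)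
    (hInd : IntegrallyIndependent (fun c i => A i c))
    (U : Matrix (Fin m ⊕ Fin k) (Fin m ⊕ Fin k) ℤ) (hU : U.det = 1 ∨ U.det = -1)
    (D : Matrix (Fin m) (Fin m) ℤ) (hD : ∀ i j : Fin m, (i : ℕ) < (j : ℕ) → D i j = 0)
    (hHNF : A * U = Matrix.fromCols D 0) :
    ∀ i : Fin m ⊕ Fin k, ∃ q : ℕ, q.Prime ∧ ∀ j : Fin k, (q : ℤ) ∣ U i (Sum.inr j) := by
  intro i
  set g : ℤ := Finset.univ.gcd (fun j : Fin k => U i (Sum.inr j)) with hg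
  by_cases hg1 : g.natAbs = 1
  · -- derive a contradiction with integral independence
    exfalso
    obtain ⟨c0, hc0⟩ := finset_gcd_bezout Finset.univ (fun j : Fin k => U i (Sum.inr j))
    rw [← hg] at hc0
    have hgg : g * g = 1 := by
      rcases Int.natAbs_eq_iff.mp hg1 with h | h <;> rw [h] <;> ring
    set c : Fin k → ℤ := fun j => g * c0 j with hcdef
    have hc : ∑ j, c j * U i (Sum.inr j) = 1 := by
      simp only [hcdef, mul_assoc]
      rw [← Finset.mul_sum, hc0, hgg]
    -- the kernel vector
    set x : (Fin m ⊕ Fin k) → ℤ := fun r => ∑ j, c j * U r (Sum.inr j) with hx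
    have hxi : x i = 1 := hc
    have hker : ∀ p : Fin m, ∑ r, A p r * x r = 0 := by
      intro p
      have : ∑ r, A p r * x r = ∑ j, (A * U) p (Sum.inr j) * c j := by
        simp only [hx, Matrix.mul_apply, Finset.mul_sum, Finset.sum_mul]
        rw [Finset.sum_comm]
        exact Finset.sum_congr rfl fun j _ => Finset.sum_congr rfl fun r _ => by ring
      rw [this, hHNF]
      simp [Matrix.fromCols_apply_inr]
    apply hInd
    refine ⟨i, fun r => -x r, ?_⟩
    funext p
    have h0 := hker p
    rw [← Finset.add_sum_erase Finset.univ _ (Finset.mem_univ i)] at h0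
    rw [hxi, mul_one] at h0
    have h1 : A p i = ∑ r ∈ Finset.univ.erase i, -(x r) * A p r := by
      have h2 : ∑ r ∈ Finset.univ.erase i, -(x r) * A p r
          = -∑ r ∈ Finset.univ.erase i, A p r * x r := by
        rw [← Finset.sum_neg_distrib]
        exact Finset.sum_congr rfl fun r _ => by ring
      rw [h2]; linarith
    simp only [Finset.sum_apply, Pi.smul_apply, smul_eq_mul]
    exact h1
  · -- gcd ≠ 1 : take a prime factor (or 2 if everything is zero)
    by_cases hg0 : g = 0
    · refine ⟨2, Nat.prime_two, fun j => ?_⟩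
      have := Finset.gcd_eq_zero_iff.mp (hg ▸ hg0 : Finset.univ.gcd
        (fun j : Fin k => U i (Sum.inr j)) = 0) j (Finset.mem_univ j)
      simp [this]
    · refine ⟨g.natAbs.minFac, Nat.minFac_prime hg1, fun j => ?_⟩
      have h1 : (g.natAbs.minFac : ℤ) ∣ g :=
        (Int.natCast_dvd_natCast.mpr (Nat.minFac_dvd _)).trans (Int.natAbs_dvd.mpr dvd_rfl)
      exact h1.trans (Finset.gcd_dvd (Finset.mem_univ j))
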